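/- Let A ∈ ℝ^{n×n} and P ∈ ℝ^{n×n} symmetric positive definite with A'P + PA negative definite. Then for every h > 0 and every x ∈ ℝⁿ, the implicit Euler iterate y = (I − hA)^{−1}x satisfies y'Py ≤ x'Px, with strict inequality when x ≠ 0. -/

import Mathlib

open Matrix

theorem stmt9 (n : ℕ) (A P : Matrix (Fin n) (Fin n) ℝ)
    (hP : P.PosDef) (hneg : (-(Aᵀ * P + P * A)).PosDef) :
    ∀ h : ℝ, 0 < h → ∀ x y : Fin n → ℝ,
      (1 - h • A) *ᵥ y = x →
      y ⬝ᵥ (P *ᵥ y) ≤ x ⬝ᵥ (P *ᵥ x) ∧ (x ≠ 0 → y ⬝ᵥ (P *ᵥ y) < x ⬝ᵥ (P *ᵥ x)) := by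
  intro h hh x y hxy
  subst hxy
  have key : ((1 - h • A) *ᵥ y) ⬝ᵥ (P *ᵥ ((1 - h • A) *ᵥ y)) =
      y ⬝ᵥ (P *ᵥ y) - h * (y ⬝ᵥ ((Aᵀ * P + P * A) *ᵥ y))
        + h^2 * ((A *ᵥ y) ⬝ᵥ (P *ᵥ (A *ᵥ y))) := by
    have h1 : (1 - h • A) *ᵥ y = y - h • (A *ᵥ y) := by
      simp [sub_mulVec, smul_mulVec]
    have h2 : (A *ᵥ y) ⬝ᵥ (P *ᵥ y) = y ⬝ᵥ ((Aᵀ * P) *ᵥ y) := by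
      rw [dotProduct_mulVec, dotProduct_mulVec, ← vecMul_vecMul, vecMul_transpose]
    rw [h1]
    simp only [mulVec_sub, mulVec_smul, sub_dotProduct, dotProduct_sub, smul_dotProduct,
      dotProduct_smul, add_mulVec, dotProduct_add, smul_eq_mul, ← Matrix.mulVec_mulVec, h2]
    ring
  have hr : 0 ≤ (A *ᵥ y) ⬝ᵥ (P *ᵥ (A *ᵥ y)) := by
    simpa using hP.posSemidef.dotProduct_mulVec_nonneg (A *ᵥ y)
  have hq : y ⬝ᵥ ((-(Aᵀ * P + P * A)) *ᵥ y) = -(y ⬝ᵥ ((Aᵀ * P + P * A) *ᵥ y)) := by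
    rw [neg_mulVec, dotProduct_neg]
  constructor
  · have hq0 : 0 ≤ y ⬝ᵥ ((-(Aᵀ * P + P * A)) *ᵥ y) := by
      simpa using hneg.posSemidef.dotProduct_mulVec_nonneg y
    rw [hq] at hq0
    nlinarith
  · intro hx
    have hy : y ≠ 0 := by
      rintro rfl
      simp at hx
    have hq0 : 0 < y ⬝ᵥ ((-(Aᵀ * P + P * A)) *ᵥ y) := by
      simpa using hneg.dotProduct_mulVec_pos hy
    rw [hq] at hq0
    nlinarith
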